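/- Let q ≥ 2 be an integer and let Γ be a discrete subgroup of the automorphism group of the (q+1)-regular tree T_{q+1} such that the action of Γ on the vertex set of T_{q+1} has only finitely many orbits (i.e., Γ is a uniform lattice). Then the critical exponent of Γ satisfies δ_Γ = log q. -/

import Mathlib

open Filter SimpleGraph

/-- The critical exponent of a subgroup `Γ` of the automorphism group of a graph `G`,
with respect to a base vertex `v`. -/
noncomputable def critExp {V : Type*} (G : SimpleGraph V) (Γ : Subgroup (G ≃g G)) (v : V) : ℝ :=
  limsup (fun n : ℕ =>
    Real.log (({γ : Γ | G.dist v ((γ : G ≃g G) v) ≤ n}).ncard) / n) atTop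

/-- `Γ` is a discrete subgroup of `Aut(G)`: every vertex stabilizer is finite. -/
def IsDiscreteSubgroup {V : Type*} (G : SimpleGraph V) (Γ : Subgroup (G ≃g G)) : Prop :=
  ∀ v : V, {γ : Γ | (γ : G ≃g G) v = v}.Finite


variable {V : Type} {G : SimpleGraph V}



lemma dist_map' (f : G ≃g G) (a b : V) : G.dist (f a) (f b) ≤ G.dist a b := by
  rcases Classical.em (G.Reachable a b) with h | h
  · obtain ⟨p, hp⟩ := h.exists_walk_length_eq_dist
    calc G.dist (f a) (f b) ≤ (p.map f.toHom).length := dist_le _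
    _ = G.dist a b := by rw [Walk.length_map, hp]
  · have h2 : ¬ G.Reachable (f a) (f b) := fun hr => h (by simpa using hr.map f.symm.toHom)
    rw [dist_eq_zero_of_not_reachable h, dist_eq_zero_of_not_reachable h2]

lemma dist_map (f : G ≃g G) (a b : V) : G.dist (f a) (f b) = G.dist a b := by
  refine le_antisymm (dist_map' f a b) ?_
  have := dist_map' f.symm (f a) (f b)
  simpa using this

lemma not_mem_geodesic_support {x a : V} (p : G.Walk x a)
    (hlen : p.length = G.dist x a) {b : V} (hba : b ≠ a) (hd : G.dist x a ≤ G.dist x b) :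
    b ∉ p.support := by
  classical
  intro h
  have h1 : G.dist x b ≤ (p.takeUntil b h).length := dist_le _
  have h2 : (p.takeUntil b h).length + (p.dropUntil b h).length = p.length := by
    have h4 := congr_arg Walk.length (p.take_spec h)
    rwa [Walk.length_append] at h4
  have h3 : (p.dropUntil b h).length = 0 := by omega
  exact hba (Walk.eq_of_length_eq_zero h3)

/-- In a tree, adjacent vertices have different distances to any base point. -/
lemma adj_dist_ne (htree : G.IsTree) (x : V) {a b : V} (hab : G.Adj a b) :
    G.dist x a ≠ G.dist x b := by
  classical
  intro he
  obtain ⟨p, hp, hplen⟩ := (htree.isConnected x a).exists_path_of_dist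
  obtain ⟨r, hr, hrlen⟩ := (htree.isConnected x b).exists_path_of_dist
  have hb : b ∉ p.support := not_mem_geodesic_support p hplen hab.ne' he.le
  have hcpath : (Walk.cons hab.symm p.reverse).IsPath := by
    rw [Walk.cons_isPath_iff]
    exact ⟨hp.reverse, by simpa using hb⟩
  have := (htree.existsUnique_path b x).unique hcpath hr.reverse
  have hlen := congr_arg Walk.length this
  simp only [Walk.length_cons, Walk.length_reverse] at hlen
  omega

lemma exists_pred (hconn : G.Connected) {x u : V} {n : ℕ} (h : G.dist x u = n + 1) :
    ∃ w, G.Adj u w ∧ G.dist x w = n := by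
  obtain ⟨p, hplen⟩ := (hconn x u).exists_walk_length_eq_dist
  rw [h] at hplen
  cases hpr : p.reverse with
  | nil =>
    have := congr_arg Walk.length hpr
    simp [hplen] at this
  | cons hadj q =>
    rename_i w
    refine ⟨w, hadj, ?_⟩
    have hq : q.reverse.length = n := by
      have := congr_arg Walk.length hpr
      simp [hplen] at this
      simp [this]
    have h1 : G.dist x w ≤ n := hq ▸ dist_le _
    have h2 : G.dist x u ≤ G.dist x w + 1 := by
      calc G.dist x u ≤ G.dist x w + G.dist w u := hconn.dist_triangle
      _ ≤ G.dist x w + 1 := by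
        have : G.dist w u = 1 := dist_eq_one_iff_adj.mpr hadj.symm
        omega
    omega

lemma pred_unique (htree : G.IsTree) {x u : V} {n : ℕ} (h : G.dist x u = n + 1)
    {w₁ w₂ : V} (h1 : G.Adj u w₁) (hd1 : G.dist x w₁ = n)
    (h2 : G.Adj u w₂) (hd2 : G.dist x w₂ = n) : w₁ = w₂ := by
  classical
  obtain ⟨p₁, hp₁, hl₁⟩ := (htree.isConnected x w₁).exists_path_of_dist
  obtain ⟨p₂, hp₂, hl₂⟩ := (htree.isConnected x w₂).exists_path_of_dist
  have hu₁ : u ∉ p₁.support := not_mem_geodesic_support p₁ hl₁ h1.ne (by omega)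
  have hu₂ : u ∉ p₂.support := not_mem_geodesic_support p₂ hl₂ h2.ne (by omega)
  have hc₁ : (Walk.cons h1 p₁.reverse).IsPath := by
    rw [Walk.cons_isPath_iff]; exact ⟨hp₁.reverse, by simpa using hu₁⟩
  have hc₂ : (Walk.cons h2 p₂.reverse).IsPath := by
    rw [Walk.cons_isPath_iff]; exact ⟨hp₂.reverse, by simpa using hu₂⟩
  have heq := (htree.existsUnique_path u x).unique hc₁ hc₂
  have hs := congr_arg Walk.support heq
  rw [Walk.support_cons, Walk.support_cons, p₁.reverse.support_eq_cons,
    p₂.reverse.support_eq_cons] at hs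
  simp only [List.cons.injEq] at hs
  exact hs.2.1

lemma adj_dist_cases (htree : G.IsTree) (x : V) {a b : V} (hab : G.Adj a b) :
    G.dist x b = G.dist x a + 1 ∨ G.dist x a = G.dist x b + 1 := by
  have h1 : G.dist x b ≤ G.dist x a + 1 := by
    have := htree.isConnected.dist_triangle (u := x) (v := a) (w := b)
    have h2 : G.dist a b = 1 := dist_eq_one_iff_adj.mpr hab
    omega
  have h2 : G.dist x a ≤ G.dist x b + 1 := by
    have := htree.isConnected.dist_triangle (u := x) (v := b) (w := a)
    have h2 : G.dist b a = 1 := dist_eq_one_iff_adj.mpr hab.symm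
    omega
  have := adj_dist_ne htree x hab
  omega


def sph (G : SimpleGraph V) (x : V) (n : ℕ) : Set V := {u | G.dist x u = n}

lemma nbr_finite {q : ℕ} (hreg : ∀ v : V, (G.neighborSet v).ncard = q + 1) (y : V) :
    (G.neighborSet y).Finite := by
  by_contra h
  have := Set.Infinite.ncard h
  rw [hreg y] at this
  omega

lemma succ_card {q : ℕ} (htree : G.IsTree) (hreg : ∀ v : V, (G.neighborSet v).ncard = q + 1)
    (x : V) (n : ℕ) (w : V) (hw : G.dist x w = n) :
    {u | G.Adj w u ∧ G.dist x u = n + 1}.ncard = if n = 0 then q + 1 else q := by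
  classical
  rcases Nat.eq_zero_or_pos n with h0 | hpos
  · subst h0
    have hwx : w = x := (htree.isConnected.dist_eq_zero_iff.mp (by rw [SimpleGraph.dist_comm]; exact hw))
    subst hwx
    have hset : {u | G.Adj w u ∧ G.dist w u = 0 + 1} = G.neighborSet w := by
      ext u
      simp only [Set.mem_setOf_eq, mem_neighborSet, zero_add]
      exact ⟨fun h => h.1, fun h => ⟨h, dist_eq_one_iff_adj.mpr h⟩⟩
    rw [hset, hreg w]
    simp
  · obtain ⟨m, rfl⟩ : ∃ m, n = m + 1 := ⟨n - 1, by omega⟩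
    obtain ⟨z, hz, hzd⟩ := exists_pred htree.isConnected hw
    have hset : {u | G.Adj w u ∧ G.dist x u = (m + 1) + 1} = G.neighborSet w \ {z} := by
      ext u
      simp only [Set.mem_setOf_eq, Set.mem_diff, mem_neighborSet, Set.mem_singleton_iff]
      constructor
      · rintro ⟨hadj, hd⟩
        exact ⟨hadj, fun he => by subst he; omega⟩
      · rintro ⟨hadj, hne⟩
        refine ⟨hadj, ?_⟩
        rcases adj_dist_cases htree x hadj with h | h
        · omega
        · exfalso
          exact hne (pred_unique htree (by omega : G.dist x w = m + 1) hadj (by omega) hz hzd)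
    rw [hset, Set.ncard_diff_singleton_of_mem (show z ∈ G.neighborSet w from hz), hreg w]
    simp

lemma sph_finite_card {q : ℕ} (htree : G.IsTree)
    (hreg : ∀ v : V, (G.neighborSet v).ncard = q + 1) (x : V) :
    ∀ n, (sph G x n).Finite ∧ (sph G x n).ncard = if n = 0 then 1 else (q+1)*q^(n-1) := by
  classical
  intro n
  induction n with
  | zero =>
    have h0 : sph G x 0 = {x} := by
      ext u
      simp only [sph, Set.mem_setOf_eq, Set.mem_singleton_iff]
      rw [htree.isConnected.dist_eq_zero_iff]
      exact ⟨fun h => h.symm, fun h => h.symm⟩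
    rw [h0]; simp
  | succ n ih =>
    obtain ⟨hfin, hcard⟩ := ih
    have sfin : ∀ w : V, ({u | G.Adj w u ∧ G.dist x u = n + 1}).Finite := fun w =>
      (nbr_finite hreg w).subset (fun u hu => hu.1)
    have key : sph G x (n+1) = ⋃ w ∈ sph G x n, {u | G.Adj w u ∧ G.dist x u = n + 1} := by
      ext u
      simp only [sph, Set.mem_setOf_eq, Set.mem_iUnion, exists_prop]
      constructor
      · intro hd
        obtain ⟨w, hadj, hwd⟩ := exists_pred htree.isConnected hd
        exact ⟨w, hwd, hadj.symm, hd⟩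
      · rintro ⟨w, hw, hadj, hd⟩; exact hd
    set A := hfin.toFinset with hA
    set F := A.biUnion (fun w => (sfin w).toFinset) with hF
    have hFs : sph G x (n+1) = ↑F := by
      rw [key]; ext u
      simp only [Set.mem_iUnion, exists_prop, hF, Finset.coe_biUnion, Finset.mem_coe,
        Set.Finite.mem_toFinset, hA, Set.mem_iUnion]
    have hdisj : ∀ w₁ ∈ A, ∀ w₂ ∈ A, w₁ ≠ w₂ →
        Disjoint ((sfin w₁).toFinset) ((sfin w₂).toFinset) := by
      intro w₁ hw₁ w₂ hw₂ hne
      rw [Finset.disjoint_left]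
      intro u hu1 hu2
      rw [Set.Finite.mem_toFinset] at hu1 hu2
      have hw₁d : G.dist x w₁ = n := by
        have := hfin.mem_toFinset.mp hw₁; exact this
      have hw₂d : G.dist x w₂ = n := by
        have := hfin.mem_toFinset.mp hw₂; exact this
      exact hne (pred_unique htree hu1.2 hu1.1.symm hw₁d hu2.1.symm hw₂d)
    have hcards : ∀ w ∈ A, ((sfin w).toFinset).card = if n = 0 then q+1 else q := by
      intro w hw
      have hwd : G.dist x w = n := hfin.mem_toFinset.mp hw
      rw [← Set.ncard_coe_finset, Set.Finite.coe_toFinset]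
      exact succ_card htree hreg x n w hwd
    have hFcard : F.card = A.card * (if n = 0 then q+1 else q) := by
      rw [hF, Finset.card_biUnion hdisj, Finset.sum_congr rfl hcards, Finset.sum_const,
        smul_eq_mul]
    have hAcard : A.card = if n = 0 then 1 else (q+1)*q^(n-1) := by
      rw [← Set.ncard_coe_finset, hfin.coe_toFinset]; exact hcard
    refine ⟨hFs ▸ F.finite_toSet, ?_⟩
    rw [hFs, Set.ncard_coe_finset, hFcard, hAcard]
    rcases Nat.eq_zero_or_pos n with h|h
    · subst h; simp
    · obtain ⟨m, rfl⟩ : ∃ m, n = m+1 := ⟨n-1, by omega⟩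
      simp [pow_succ, Nat.mul_assoc]

def bll (G : SimpleGraph V) (x : V) (n : ℕ) : Set V := {u | G.dist x u ≤ n}

lemma sph_lower {q : ℕ} (hq : 1 ≤ q) (htree : G.IsTree)
    (hreg : ∀ v : V, (G.neighborSet v).ncard = q + 1) (x : V) (n : ℕ) :
    q ^ n ≤ (sph G x n).ncard := by
  rw [(sph_finite_card htree hreg x n).2]
  rcases Nat.eq_zero_or_pos n with h|h
  · simp [h]
  · obtain ⟨m, rfl⟩ : ∃ m, n = m+1 := ⟨n-1, by omega⟩
    rw [if_neg (by omega : ¬ (m + 1 = 0)), Nat.add_sub_cancel]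
    calc q^(m+1) = q * q^m := by ring
    _ ≤ (q+1) * q^m := by
      apply Nat.mul_le_mul_right; omega

lemma bll_finite {q : ℕ} (htree : G.IsTree)
    (hreg : ∀ v : V, (G.neighborSet v).ncard = q + 1) (x : V) (n : ℕ) :
    (bll G x n).Finite := by
  have : bll G x n ⊆ ⋃ k ∈ Finset.range (n+1), sph G x k := by
    intro u hu
    simp only [Set.mem_iUnion, exists_prop, Finset.mem_range]
    exact ⟨G.dist x u, by simpa [bll] using Nat.lt_succ_of_le hu, rfl⟩
  exact (Set.Finite.biUnion (Finset.range (n+1)).finite_toSet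
    (fun k _ => (sph_finite_card htree hreg x k).1)).subset this

lemma bll_card_le {q : ℕ} (hq : 1 ≤ q) (htree : G.IsTree)
    (hreg : ∀ v : V, (G.neighborSet v).ncard = q + 1) (x : V) (n : ℕ) :
    (bll G x n).ncard ≤ (n+1) * ((q+1) * q^n) := by
  classical
  have hsub : bll G x n ⊆ ⋃ k ∈ Finset.range (n+1), sph G x k := by
    intro u hu
    simp only [Set.mem_iUnion, exists_prop, Finset.mem_range]
    exact ⟨G.dist x u, by simpa [bll] using Nat.lt_succ_of_le hu, rfl⟩
  have hfin : ∀ k, (sph G x k).Finite := fun k => (sph_finite_card htree hreg x k).1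
  set B := (Finset.range (n+1)).biUnion (fun k => (hfin k).toFinset) with hB
  have h1 : (bll G x n).ncard ≤ B.card := by
    rw [← Set.ncard_coe_finset]
    apply Set.ncard_le_ncard _ B.finite_toSet
    intro u hu
    have := hsub hu
    simp only [Set.mem_iUnion, exists_prop] at this
    obtain ⟨k, hk, hks⟩ := this
    simp only [hB, Finset.coe_biUnion, Set.mem_iUnion, Finset.mem_coe,
      Set.Finite.mem_toFinset, exists_prop]
    exact ⟨k, hk, hks⟩
  have h2 : B.card ≤ (n+1) * ((q+1) * q^n) := by
    calc B.card ≤ ∑ k ∈ Finset.range (n+1), ((hfin k).toFinset).card :=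
      Finset.card_biUnion_le
    _ ≤ ∑ _k ∈ Finset.range (n+1), (q+1) * q^n := by
      apply Finset.sum_le_sum
      intro k hk
      rw [← Set.ncard_coe_finset, Set.Finite.coe_toFinset,
        (sph_finite_card htree hreg x k).2]
      rcases Nat.eq_zero_or_pos k with h|h
      · simp [h]
        exact Nat.one_le_iff_ne_zero.mpr (by positivity)
      · obtain ⟨m, rfl⟩ : ∃ m, k = m+1 := ⟨k-1, by omega⟩
        simp only [if_neg (by omega : ¬ (m + 1 = 0)), Nat.add_sub_cancel]
        apply Nat.mul_le_mul_left
        apply Nat.pow_le_pow_right hq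
        simp only [Finset.mem_range] at hk
        omega
    _ = (n+1) * ((q+1) * q^n) := by
      rw [Finset.sum_const, Finset.card_range, smul_eq_mul]
  omega

section Group
variable {Γ : Subgroup (G ≃g G)} {v : V}

lemma fiber_subset (hΓ : True) (u : V) (γ₀ : Γ) (hγ₀ : (γ₀ : G ≃g G) v = u) :
    {γ : Γ | (γ : G ≃g G) v = u} ⊆ (fun γ : Γ => γ₀⁻¹ * γ) ⁻¹' {γ : Γ | (γ : G ≃g G) v = v} := by
  intro γ hγ
  simp only [Set.mem_preimage, Set.mem_setOf_eq] at *
  show ((γ₀⁻¹ * γ : Γ) : G ≃g G) v = v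
  have : ((γ₀⁻¹ * γ : Γ) : G ≃g G) = (γ₀ : G ≃g G)⁻¹ * (γ : G ≃g G) := by
    push_cast [Subgroup.coe_mul]; rfl
  rw [this, RelIso.mul_apply, hγ, ← hγ₀, RelIso.inv_apply_self]

lemma fiber_finite (hdisc : IsDiscreteSubgroup G Γ) (u : V) :
    {γ : Γ | (γ : G ≃g G) v = u}.Finite ∧
      {γ : Γ | (γ : G ≃g G) v = u}.ncard ≤ {γ : Γ | (γ : G ≃g G) v = v}.ncard := by
  classical
  rcases Set.eq_empty_or_nonempty {γ : Γ | (γ : G ≃g G) v = u} with he | ⟨γ₀, hγ₀⟩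
  · rw [he]; simp
  · have hsub := fiber_subset trivial u γ₀ hγ₀
    have hstab : {γ : Γ | (γ : G ≃g G) v = v}.Finite := hdisc v
    have hinj : Function.Injective (fun γ : Γ => γ₀⁻¹ * γ) := fun a b h => by
      simpa using mul_left_cancel (a := γ₀⁻¹) h
    have hfin : {γ : Γ | (γ : G ≃g G) v = u}.Finite :=
      ((hstab.preimage (hinj.injOn)).subset hsub)
    refine ⟨hfin, ?_⟩
    exact Set.ncard_le_ncard_of_injOn (fun γ : Γ => γ₀⁻¹ * γ)
      (fun γ hγ => hsub hγ) hinj.injOn hstab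

lemma S_finite_card {q : ℕ} (hq : 1 ≤ q) (htree : G.IsTree)
    (hreg : ∀ v : V, (G.neighborSet v).ncard = q + 1)
    (hdisc : IsDiscreteSubgroup G Γ) (n : ℕ) :
    {γ : Γ | G.dist v ((γ : G ≃g G) v) ≤ n}.Finite ∧
    {γ : Γ | G.dist v ((γ : G ≃g G) v) ≤ n}.ncard ≤
      {γ : Γ | (γ : G ≃g G) v = v}.ncard * ((n+1) * ((q+1) * q^n)) := by
  classical
  have hball := bll_finite htree hreg (x := v) (n := n)
  have hsub : {γ : Γ | G.dist v ((γ : G ≃g G) v) ≤ n} ⊆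
      ⋃ u ∈ hball.toFinset, {γ : Γ | (γ : G ≃g G) v = u} := by
    intro γ hγ
    simp only [Set.mem_iUnion, exists_prop, Set.Finite.mem_toFinset]
    exact ⟨(γ : G ≃g G) v, hγ, rfl⟩
  have hfib := fiber_finite (v := v) hdisc
  constructor
  · exact (Set.Finite.biUnion (hball.toFinset : Finset V).finite_toSet
      (fun u _ => (hfib u).1)).subset hsub
  · set FB := hball.toFinset.biUnion (fun u => ((hfib u).1).toFinset) with hFB
    have h1 : {γ : Γ | G.dist v ((γ : G ≃g G) v) ≤ n}.ncard ≤ FB.card := by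
      rw [← Set.ncard_coe_finset]
      apply Set.ncard_le_ncard _ FB.finite_toSet
      intro γ hγ
      have := hsub hγ
      simp only [Set.mem_iUnion, exists_prop] at this
      obtain ⟨u, hu, hus⟩ := this
      simp only [hFB, Finset.coe_biUnion, Set.mem_iUnion, Finset.mem_coe,
        Set.Finite.mem_toFinset, exists_prop]
      exact ⟨u, hball.mem_toFinset.mp hu, hus⟩
    have h2 : FB.card ≤ ((n+1) * ((q+1) * q^n)) * {γ : Γ | (γ : G ≃g G) v = v}.ncard := by
      calc FB.card ≤ ∑ u ∈ hball.toFinset, ((hfib u).1).toFinset.card :=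
        Finset.card_biUnion_le
      _ ≤ ∑ _u ∈ hball.toFinset, {γ : Γ | (γ : G ≃g G) v = v}.ncard := by
        apply Finset.sum_le_sum
        intro u _
        rw [← Set.ncard_coe_finset, Set.Finite.coe_toFinset]
        exact (hfib u).2
      _ = hball.toFinset.card * {γ : Γ | (γ : G ≃g G) v = v}.ncard := by
        rw [Finset.sum_const, smul_eq_mul]
      _ ≤ ((n+1) * ((q+1) * q^n)) * {γ : Γ | (γ : G ≃g G) v = v}.ncard := by
        apply Nat.mul_le_mul_right
        rw [← Set.ncard_coe_finset, Set.Finite.coe_toFinset]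
        exact bll_card_le hq htree hreg v n
    calc {γ : Γ | G.dist v ((γ : G ≃g G) v) ≤ n}.ncard ≤ FB.card := h1
    _ ≤ _ := h2
    _ = _ := by ring

lemma S_lower {q : ℕ} (hq : 1 ≤ q) (htree : G.IsTree)
    (hreg : ∀ v : V, (G.neighborSet v).ncard = q + 1)
    (hdisc : IsDiscreteSubgroup G Γ) (D : ℕ)
    (hD : ∀ u : V, ∃ γ : Γ, G.dist u ((γ : G ≃g G) v) ≤ D) (n : ℕ) :
    q ^ n ≤ ((D+1) * ((q+1) * q^D)) * {γ : Γ | G.dist v ((γ : G ≃g G) v) ≤ n + D}.ncard := by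
  classical
  choose c hc using hD
  have hsphfin := (sph_finite_card htree hreg v n).1
  have hSfin := (S_finite_card (v := v) hq htree hreg hdisc (n + D)).1
  have hmaps : ∀ u ∈ hsphfin.toFinset, c u ∈ hSfin.toFinset := by
    intro u hu
    rw [Set.Finite.mem_toFinset] at hu ⊢
    show G.dist v ((c u : G ≃g G) v) ≤ n + D
    calc G.dist v ((c u : G ≃g G) v) ≤ G.dist v u + G.dist u ((c u : G ≃g G) v) :=
      htree.isConnected.dist_triangle
    _ ≤ n + D := by
      have h1 : G.dist v u = n := hu
      have h2 := hc u
      omega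
  have hfibers : ∀ γ ∈ hSfin.toFinset,
      (hsphfin.toFinset.filter (fun u => c u = γ)).card ≤ (D+1) * ((q+1) * q^D) := by
    intro γ _
    have hsub2 : (hsphfin.toFinset.filter (fun u => c u = γ) : Set V) ⊆
        bll G ((γ : G ≃g G) v) D := by
      intro u hu
      simp only [Finset.coe_filter, Set.mem_setOf_eq, Set.Finite.mem_toFinset] at hu
      obtain ⟨_, hcu⟩ := hu
      show G.dist ((γ : G ≃g G) v) u ≤ D
      rw [SimpleGraph.dist_comm]
      simpa [hcu] using hc u
    calc (hsphfin.toFinset.filter (fun u => c u = γ)).card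
        = ((hsphfin.toFinset.filter (fun u => c u = γ) : Finset V) : Set V).ncard := by
          rw [Set.ncard_coe_finset]
      _ ≤ (bll G ((γ : G ≃g G) v) D).ncard := by
          apply Set.ncard_le_ncard hsub2 (bll_finite htree hreg _ D)
      _ ≤ (D+1) * ((q+1) * q^D) := bll_card_le hq htree hreg _ D
  calc q ^ n ≤ (sph G v n).ncard := sph_lower hq htree hreg v n
  _ = hsphfin.toFinset.card := by rw [← Set.ncard_coe_finset, Set.Finite.coe_toFinset]
  _ ≤ ((D+1) * ((q+1) * q^D)) * hSfin.toFinset.card :=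
      Finset.card_le_mul_card_image_of_maps_to hmaps _ hfibers
  _ = ((D+1) * ((q+1) * q^D)) * {γ : Γ | G.dist v ((γ : G ≃g G) v) ≤ n + D}.ncard := by
      rw [← Set.ncard_coe_finset, Set.Finite.coe_toFinset]

end Group


lemma log_succ_div_tendsto : Tendsto (fun n : ℕ => Real.log (n+1) / n) atTop (nhds 0) := by
  have h1 : Tendsto (fun x : ℝ => Real.log x / x) atTop (nhds 0) :=
    Real.isLittleO_log_id_atTop.tendsto_div_nhds_zero
  have h2 : Tendsto (fun n : ℕ => (n : ℝ) + 1) atTop atTop :=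
    tendsto_atTop_add_const_right _ 1 tendsto_natCast_atTop_atTop
  have h3 : Tendsto (fun n : ℕ => Real.log (n+1) / (n+1)) atTop (nhds 0) := h1.comp h2
  have h4 : Tendsto (fun n : ℕ => ((n : ℝ)+1) / n) atTop (nhds 1) := by
    have : Tendsto (fun n : ℕ => 1 + 1/(n:ℝ)) atTop (nhds (1 + 0)) :=
      (tendsto_const_nhds).add (tendsto_const_div_atTop_nhds_zero_nat 1)
    rw [add_zero] at this
    apply this.congr'
    filter_upwards [eventually_gt_atTop 0] with n hn
    field_simp
  have := h3.mul h4
  rw [zero_mul] at this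
  apply this.congr'
  filter_upwards [eventually_gt_atTop 0] with n hn
  have hn' : (n:ℝ) ≠ 0 := Nat.cast_ne_zero.mpr hn.ne'
  field_simp


/-- If a discrete subgroup `Γ` of the automorphism group of the
`(q+1)`-regular tree has only finitely many vertex orbits (i.e. `Γ` is a uniform
lattice), then its critical exponent equals `log q`. -/
theorem critExp_eq_log_of_uniform_lattice
    (q : ℕ) (hq : 2 ≤ q)
    (V : Type) (G : SimpleGraph V) (htree : G.IsTree)
    (hreg : ∀ v : V, (G.neighborSet v).ncard = q + 1)
    (Γ : Subgroup (G ≃g G)) (hdisc : IsDiscreteSubgroup G Γ)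
    (hcofinite : ∃ s : Finset V, ∀ v : V, ∃ w ∈ s, ∃ γ : Γ, (γ : G ≃g G) w = v)
    (v : V) :
    critExp G Γ v = Real.log q := by
  classical
  have hq1 : 1 ≤ q := by omega
  set N : ℕ → ℕ := fun n => ({γ : Γ | G.dist v ((γ : G ≃g G) v) ≤ n}).ncard with hN
  set M : ℕ := ({γ : Γ | (γ : G ≃g G) v = v}).ncard with hM
  obtain ⟨s, hs⟩ := hcofinite
  set D : ℕ := s.sup (fun w => G.dist w v) with hD
  have hDprop : ∀ u : V, ∃ γ : Γ, G.dist u ((γ : G ≃g G) v) ≤ D := by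
    intro u
    obtain ⟨w, hw, γ, hγ⟩ := hs u
    refine ⟨γ, ?_⟩
    rw [← hγ, dist_map (γ : G ≃g G) w v]
    exact hD ▸ Finset.le_sup (f := fun w => G.dist w v) hw
  set K : ℕ := (D+1) * ((q+1) * q^D) with hK
  have hSfc := fun n => S_finite_card (Γ := Γ) (v := v) hq1 htree hreg hdisc n
  have hupper : ∀ n, N n ≤ M * ((n+1) * ((q+1) * q^n)) := fun n => (hSfc n).2
  have hlower : ∀ n, D ≤ n → q ^ (n - D) ≤ K * N n := by
    intro n hn
    have := S_lower (Γ := Γ) (v := v) hq1 htree hreg hdisc D hDprop (n - D)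
    rwa [Nat.sub_add_cancel hn] at this
  have hNpos : ∀ n, 1 ≤ N n := by
    intro n
    have hmem : (1 : Γ) ∈ {γ : Γ | G.dist v ((γ : G ≃g G) v) ≤ n} := by
      have h1 : ((1 : Γ) : G ≃g G) v = v := rfl
      simp only [Set.mem_setOf_eq, h1, SimpleGraph.dist_self]
      omega
    exact (Set.ncard_pos ((hSfc n).1)).mpr ⟨1, hmem⟩
  have hM1 : 1 ≤ M := by
    have hmem : (1 : Γ) ∈ {γ : Γ | (γ : G ≃g G) v = v} := rfl
    exact (Set.ncard_pos (hdisc v)).mpr ⟨1, hmem⟩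
  have hK1 : 1 ≤ K := by
    have : 0 < K := by rw [hK]; positivity
    omega
  -- real sequences for the squeeze
  set L : ℝ := Real.log q with hL
  set low : ℕ → ℝ := fun n => (((n:ℝ) - D) * L - Real.log K) / n with hlow
  set upp : ℕ → ℝ := fun n =>
    (Real.log M + Real.log (n+1) + Real.log (q+1) + n * L) / n with hupp
  have hlowt : Tendsto low atTop (nhds L) := by
    have h1 : Tendsto (fun n : ℕ => L - ((D:ℝ) * L + Real.log K) / n) atTop (nhds (L - 0)) :=
      tendsto_const_nhds.sub (tendsto_const_div_atTop_nhds_zero_nat _)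
    rw [sub_zero] at h1
    apply h1.congr'
    filter_upwards [eventually_gt_atTop 0] with n hn
    have hn' : (n:ℝ) ≠ 0 := Nat.cast_ne_zero.mpr hn.ne'
    rw [hlow]
    field_simp
    ring
  have huppt : Tendsto upp atTop (nhds L) := by
    have h1 : Tendsto (fun n : ℕ => Real.log M / n + Real.log (n+1) / n
        + Real.log (q+1) / n + L) atTop (nhds (0 + 0 + 0 + L)) := by
      exact (((tendsto_const_div_atTop_nhds_zero_nat _).add
        log_succ_div_tendsto).add (tendsto_const_div_atTop_nhds_zero_nat _)).add
        tendsto_const_nhds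
    rw [zero_add, zero_add, zero_add] at h1
    apply h1.congr'
    filter_upwards [eventually_gt_atTop 0] with n hn
    have hn' : (n:ℝ) ≠ 0 := Nat.cast_ne_zero.mpr hn.ne'
    rw [hupp]
    field_simp
  have hqpos : (0:ℝ) < q := by positivity
  have hmain : Tendsto (fun n : ℕ => Real.log (N n) / n) atTop (nhds L) := by
    apply tendsto_of_tendsto_of_tendsto_of_le_of_le' hlowt huppt
    · -- low ≤ log N / n eventually
      filter_upwards [eventually_ge_atTop (D + 1)] with n hn
      have hn0 : 0 < n := by omega
      have hnD : D ≤ n := by omega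
      have h1 : (q:ℝ) ^ (n - D) ≤ (K:ℝ) * (N n) := by
        exact_mod_cast hlower n hnD
      have h2 : Real.log ((q:ℝ) ^ (n - D)) ≤ Real.log ((K:ℝ) * (N n)) :=
        Real.log_le_log (by positivity) h1
      rw [Real.log_pow, Real.log_mul (by positivity)
        (Nat.cast_ne_zero.mpr (by have := hNpos n; omega))] at h2
      have h3 : ((n - D : ℕ) : ℝ) = (n:ℝ) - D := by
        push_cast [Nat.cast_sub hnD]; ring
      rw [h3] at h2
      rw [hlow]
      apply div_le_div_of_nonneg_right _ (by positivity)
      · linarith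
    · -- log N / n ≤ upp eventually
      filter_upwards [eventually_gt_atTop 0] with n hn
      have h1 : (N n : ℝ) ≤ (M:ℝ) * (((n:ℝ)+1) * (((q:ℝ)+1) * (q:ℝ)^n)) := by
        exact_mod_cast hupper n
      have h2 : Real.log (N n) ≤
          Real.log ((M:ℝ) * (((n:ℝ)+1) * (((q:ℝ)+1) * (q:ℝ)^n))) :=
        Real.log_le_log (by exact_mod_cast hNpos n) h1
      have hM0 : (0:ℝ) < (M:ℝ) := by exact_mod_cast hM1
      have h3 : Real.log ((M:ℝ) * (((n:ℝ)+1) * (((q:ℝ)+1) * (q:ℝ)^n)))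
          = Real.log M + Real.log (n+1) + Real.log (q+1) + n * L := by
        rw [Real.log_mul (by positivity) (by positivity),
          Real.log_mul (by positivity) (by positivity),
          Real.log_mul (by positivity) (by positivity), Real.log_pow]
        push_cast
        ring
      rw [h3] at h2
      rw [hupp]
      apply div_le_div_of_nonneg_right h2 (by positivity)
  exact hmain.limsup_eq
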